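/- For every r ≥ 5/2 and integer t ≥ 1 (with r ≥ 2): if G is a graph whose maximum degree is at least 5r−4 and in which no edge is incident to all other edges, then for every function f: E(G) → E(G) with f(e) ∩ e = ∅ for all e, there is a copy of the star K_{1,r} in G (a vertex v together with r edges at v) such that for every edge e of the star, f(e) contains no vertex of the star. -/

import Mathlib

open SimpleGraph

variable {V W : Type*}

/-- Two `Sym2` elements (edges) are vertex-disjoint. -/
def sym2Disjoint (e e' : Sym2 V) : Prop := ∀ v, v ∈ e → v ∉ e'

/-- Edge set of the copy of `G` in `H` given by an (injective) homomorphism. -/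
def copyEdges (G : SimpleGraph V) (H : SimpleGraph W) (φ : G →g H) : Set (Sym2 W) :=
  Sym2.map φ '' G.edgeSet

/-- The edge set `E` is `f`-free. -/
def IsFreeSet (f : Sym2 W → Sym2 W) (E : Set (Sym2 W)) : Prop := ∀ e ∈ E, f e ∉ E

/-- `f` is an edge mapping of `H` with `f e ≠ e` (equivalently `|f e ∩ e| ≤ 1`). -/
def IsEdgeMap (H : SimpleGraph W) (f : Sym2 W → Sym2 W) : Prop :=
  ∀ e ∈ H.edgeSet, f e ∈ H.edgeSet ∧ f e ≠ e

/-- `f` is an edge mapping of `H` with `f e ∩ e = ∅`. -/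
def IsDisjEdgeMap (H : SimpleGraph W) (f : Sym2 W → Sym2 W) : Prop :=
  ∀ e ∈ H.edgeSet, f e ∈ H.edgeSet ∧ sym2Disjoint e (f e)

/-- `H` contains a copy of `G` (as a not necessarily induced subgraph). -/
def Contains (G : SimpleGraph V) (H : SimpleGraph W) : Prop :=
  ∃ φ : G →g H, Function.Injective φ

/-- `H` has no `f`-free copy of `G`. -/
def NoFreeCopy (G : SimpleGraph V) (H : SimpleGraph W) (f : Sym2 W → Sym2 W) : Prop :=
  ∀ φ : G →g H, Function.Injective φ → ¬ IsFreeSet f (copyEdges G H φ)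

/-- The Turán number `ex(n, G)`. -/
noncomputable def exNum (n : ℕ) (G : SimpleGraph V) : ℕ :=
  sSup {m | ∃ H : SimpleGraph (Fin n), H.edgeSet.ncard = m ∧ ¬ Contains G H}

/-- The parameter `h(n, G)`. -/
noncomputable def hNum (n : ℕ) (G : SimpleGraph V) : ℕ :=
  sSup {m | ∃ (H : SimpleGraph (Fin n)) (f : Sym2 (Fin n) → Sym2 (Fin n)),
    H.edgeSet.ncard = m ∧ IsEdgeMap H f ∧ NoFreeCopy G H f}

/-- Independence number. -/
noncomputable def indepNum (G : SimpleGraph V) [Fintype V] : ℕ :=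
  sSup {m | ∃ s : Finset V, (∀ v ∈ s, ∀ w ∈ s, ¬ G.Adj v w) ∧ s.card = m}

/-- The matching `tK₂` on `Fin (2t)`: vertices `2i, 2i+1` are matched. -/
def matching (t : ℕ) : SimpleGraph (Fin (2*t)) :=
  SimpleGraph.fromRel (fun v w => (v : ℕ) / 2 = (w : ℕ) / 2)

/-- The star `K_{1,r}` on `Fin (r+1)`, with center `0`. -/
def starG (r : ℕ) : SimpleGraph (Fin (r+1)) :=
  SimpleGraph.fromRel (fun v _ => v = 0)

lemma indep_lemma {V : Type*} [DecidableEq V] (g : V → Finset V)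
    (hg : ∀ w, (g w).card ≤ 2) :
    ∀ S : Finset V, (∀ w ∈ S, w ∉ g w) →
    ∃ T ⊆ S, S.card ≤ 5 * T.card ∧ ∀ w ∈ T, ∀ w' ∈ T, w' ∉ g w := by
  intro S
  induction S using Finset.strongInduction with
  | _ S ih =>
    intro hself
    rcases S.eq_empty_or_nonempty with rfl | hne
    · exact ⟨∅, Finset.Subset.refl _, by simp, by simp⟩
    · -- find low degree vertex
      have hsum : ∑ x ∈ S, ((g x ∩ S).card + (S.filter (fun w => x ∈ g w)).card)
          ≤ ∑ x ∈ S, 4 := by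
        have h1 : ∑ x ∈ S, (g x ∩ S).card ≤ ∑ x ∈ S, 2 := by
          apply Finset.sum_le_sum
          intro x _
          exact le_trans (Finset.card_le_card (Finset.inter_subset_left)) (hg x)
        have h2 : ∑ x ∈ S, (S.filter (fun w => x ∈ g w)).card
            = ∑ w ∈ S, (S.filter (fun x => x ∈ g w)).card := by
          simp only [Finset.card_filter]
          rw [Finset.sum_comm]
        have h3 : ∑ w ∈ S, (S.filter (fun x => x ∈ g w)).card ≤ ∑ w ∈ S, 2 := by
          apply Finset.sum_le_sum
          intro w _
          calc (S.filter (fun x => x ∈ g w)).card ≤ (g w).card := by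
                apply Finset.card_le_card
                intro x hx
                exact (Finset.mem_filter.mp hx).2
            _ ≤ 2 := hg w
        rw [Finset.sum_add_distrib]
        calc _ ≤ (∑ x ∈ S, 2) + (∑ x ∈ S, 2) := by
              refine Nat.add_le_add h1 ?_
              rw [h2]; exact h3
          _ = ∑ x ∈ S, 4 := by simp [Finset.sum_const]; ring
      obtain ⟨x, hxS, hx4⟩ := Finset.exists_le_of_sum_le hne hsum
      set N : Finset V := (g x ∩ S) ∪ S.filter (fun w => x ∈ g w) with hN
      have hNcard : N.card ≤ 4 := le_trans (Finset.card_union_le _ _) hx4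
      set S' : Finset V := S \ insert x N with hS'
      have hS'sub : S' ⊆ S := Finset.sdiff_subset
      have hxS' : x ∉ S' := by simp [hS']
      have hssub : S' ⊂ S := Finset.ssubset_iff_of_subset hS'sub |>.mpr ⟨x, hxS, hxS'⟩
      have hcard : S.card ≤ S'.card + 5 := by
        have := Finset.card_sdiff_add_card_eq_card (Finset.inter_subset_right :
          insert x N ∩ S ⊆ S)
        have h0 : S \ (insert x N ∩ S) = S' := by
          rw [hS']; ext y; simp only [Finset.mem_sdiff, Finset.mem_inter]; tauto
        rw [h0] at this
        have : S.card ≤ S'.card + (insert x N).card := by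
          rw [← this]
          exact Nat.add_le_add_left (Finset.card_le_card Finset.inter_subset_left) _
        have h5 : (insert x N).card ≤ 5 := le_trans (Finset.card_insert_le _ _)
          (Nat.add_le_add_right hNcard 1 |>.trans (by norm_num))
        omega
      obtain ⟨T', hT'sub, hT'card, hT'ind⟩ := ih S' hssub
        (fun w hw => hself w (hS'sub hw))
      refine ⟨insert x T', ?_, ?_, ?_⟩
      · intro y hy
        rcases Finset.mem_insert.mp hy with rfl | hy
        · exact hxS
        · exact hS'sub (hT'sub hy)
      · have hxT' : x ∉ T' := fun h => hxS' (hT'sub h)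
        rw [Finset.card_insert_of_notMem hxT']
        omega
      · intro w hw w' hw' hmem
        obtain hwx | hwT := Finset.mem_insert.mp hw
        · obtain hw'x | hw'T := Finset.mem_insert.mp hw'
          · subst hwx; subst hw'x; exact hself _ hxS hmem
          · subst hwx
            have hw'S' := hT'sub hw'T
            have hmN : w' ∈ N := Finset.mem_union_left _
              (Finset.mem_inter.mpr ⟨hmem, hS'sub hw'S'⟩)
            exact (Finset.mem_sdiff.mp hw'S').2 (Finset.mem_insert_of_mem hmN)
        · obtain hw'x | hw'T := Finset.mem_insert.mp hw'
          · subst hw'x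
            have hwS' := hT'sub hwT
            have hmN : w ∈ N := Finset.mem_union_right _
              (Finset.mem_filter.mpr ⟨hS'sub hwS', hmem⟩)
            exact (Finset.mem_sdiff.mp hwS').2 (Finset.mem_insert_of_mem hmN)
          · exact hT'ind w hwT w' hw'T hmem

open SimpleGraph

lemma sym2_filter_card_le {V : Type*} [Fintype V] [DecidableEq V] (e : Sym2 V) :
    (Finset.univ.filter (· ∈ e)).card ≤ 2 := by
  induction e with
  | _ a b =>
    calc (Finset.univ.filter (· ∈ s(a,b))).card ≤ ({a, b} : Finset V).card := by
          apply Finset.card_le_card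
          intro x hx
          have := (Finset.mem_filter.mp hx).2
          rw [Sym2.mem_iff] at this
          simpa using this
      _ ≤ 2 := Finset.card_insert_le _ _ |>.trans (by simp)

/-- if G has maximum degree ≥ 5r-4 and no edge incident to all other
edges, then for every f with f(e) ∩ e = ∅ there is an f-exclusive copy of K_{1,r}. -/
theorem stmt11 {V : Type*} [Fintype V] [DecidableEq V] (r : ℕ) (hr : 2 ≤ r)
    (G : SimpleGraph V) [DecidableRel G.Adj]
    (hdeg : ∃ v, 5*r - 4 ≤ G.degree v)
    (hinc : ∀ e ∈ G.edgeSet, ∃ e' ∈ G.edgeSet, e' ≠ e ∧ sym2Disjoint e e')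
    (f : Sym2 V → Sym2 V) (hf : IsDisjEdgeMap G f) :
    ∃ (v : V) (s : Finset V), s.card = r ∧ (∀ w ∈ s, G.Adj v w) ∧
      ∀ w ∈ s, ∀ u ∈ f s(v, w), u ∉ insert v s := by
  obtain ⟨v, hv⟩ := hdeg
  set g : V → Finset V := fun w => Finset.univ.filter (· ∈ f s(v, w)) with hgd
  have hg : ∀ w, (g w).card ≤ 2 := fun w => sym2_filter_card_le _
  have hmemg : ∀ w u, u ∈ g w ↔ u ∈ f s(v, w) := by
    intro w u; simp [hgd]
  obtain ⟨T, hTsub, hTcard, hTind⟩ := indep_lemma g hg (G.neighborFinset v)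
    (by
      intro w hw
      rw [hmemg]
      have hadj : G.Adj v w := (G.mem_neighborFinset v w).mp hw
      have := (hf s(v, w) (by rwa [mem_edgeSet])).2
      exact this w (by simp))
  have hTr : r ≤ T.card := by
    rw [card_neighborFinset_eq_degree] at hTcard
    omega
  obtain ⟨s, hsT, hscard⟩ := Finset.exists_subset_card_eq hTr
  refine ⟨v, s, hscard, ?_, ?_⟩
  · intro w hw
    exact (G.mem_neighborFinset v w).mp (hTsub (hsT hw))
  · intro w hw u hu hmem
    have hadj : G.Adj v w := (G.mem_neighborFinset v w).mp (hTsub (hsT hw))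
    have hdisj := (hf s(v, w) (by rwa [mem_edgeSet])).2
    rcases Finset.mem_insert.mp hmem with rfl | hus
    · exact hdisj u (by simp) hu
    · exact hTind w (hsT hw) u (hsT hus) ((hmemg w u).mpr hu)
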